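/- Let q, x_1, …, x_n be points in ℝ^d with x_i ≠ q for all i, and for each i let H_q(x_i) = { y ∈ ℝ^d : (y − q)·(x_i − q) ≥ |x_i − q|² }. Then ⋂_{i=1}^n H_q(x_i) = ∅ if and only if q ∈ conv{x_1, …, x_n}. -/

import Mathlib

open Finset

/-- For `x i ≠ q`, let `H_q(x i) = {y : ⟪y - q, x i - q⟫ ≥ ‖x i - q‖²}` be the closed
halfspace bounded by the hyperplane through `x i` perpendicular to the line through `x i`
and `q`, not containing `q`. Then `⋂ i, H_q(x i) = ∅` iff `q ∈ conv{x 1, …, x n}`. -/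
theorem inter_halfspaces_empty_iff_mem_convexHull (d n : ℕ) (hn : 0 < n)
    (q : EuclideanSpace ℝ (Fin d)) (x : Fin n → EuclideanSpace ℝ (Fin d))
    (hx : ∀ i, x i ≠ q) :
    (⋂ i : Fin n,
        {y : EuclideanSpace ℝ (Fin d) | ‖x i - q‖ ^ 2 ≤ (inner ℝ (y - q) (x i - q) : ℝ)}) = ∅ ↔
      q ∈ convexHull ℝ (Set.range x) := by
  haveI : Nonempty (Fin n) := ⟨⟨0, hn⟩⟩
  constructor
  · intro hempty
    by_contra hq
    obtain ⟨f, u, hfq, hfs⟩ := geometric_hahn_banach_point_closed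
      (convex_convexHull ℝ _) ((Set.finite_range x).isClosed_convexHull ℝ) hq
    set v := (InnerProductSpace.toDual ℝ (EuclideanSpace ℝ (Fin d))).symm f with hvdef
    have hv : ∀ z, (inner ℝ v z : ℝ) = f z := fun z =>
      InnerProductSpace.toDual_symm_apply
    have hc : (0 : ℝ) < u - f q := by linarith
    set M : ℝ := Finset.univ.sup' Finset.univ_nonempty (fun i => ‖x i - q‖ ^ 2) with hM
    have hM0 : 0 ≤ M := le_trans (sq_nonneg _)
      (Finset.le_sup' (fun i => ‖x i - q‖ ^ 2) (Finset.mem_univ (Classical.arbitrary _)))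
    set t : ℝ := M / (u - f q) with ht
    have ht0 : 0 ≤ t := div_nonneg hM0 hc.le
    have : (q + t • v) ∈ ⋂ i : Fin n,
        {y : EuclideanSpace ℝ (Fin d) | ‖x i - q‖ ^ 2 ≤ (inner ℝ (y - q) (x i - q) : ℝ)} := by
      refine Set.mem_iInter.2 fun i => ?_
      have hxi : u < f (x i) := hfs _ (subset_convexHull ℝ _ (Set.mem_range_self i))
      have hinner : (inner ℝ (q + t • v - q) (x i - q) : ℝ) = t * (f (x i) - f q) := by
        have : q + t • v - q = t • v := by abel
        rw [this, real_inner_smul_left, inner_sub_right, hv, hv]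
      rw [Set.mem_setOf_eq, hinner]
      have h1 : ‖x i - q‖ ^ 2 ≤ M :=
        Finset.le_sup' (fun i => ‖x i - q‖ ^ 2) (Finset.mem_univ i)
      have h2 : t * (u - f q) ≤ t * (f (x i) - f q) :=
        mul_le_mul_of_nonneg_left (by linarith) ht0
      have h3 : t * (u - f q) = M := div_mul_cancel₀ _ hc.ne'
      linarith
    rw [hempty] at this
    exact this
  · intro hq
    rw [Set.eq_empty_iff_forall_notMem]
    intro y hy
    rw [mem_convexHull_iff_exists_fintype] at hq
    obtain ⟨ι, _, w, z, hw0, hw1, hz, hzq⟩ := hq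
    have hterm : ∀ i, w i * ‖z i - q‖ ^ 2 ≤ w i * (inner ℝ (y - q) (z i - q) : ℝ) := by
      intro i
      obtain ⟨j, hj⟩ := hz i
      refine mul_le_mul_of_nonneg_left ?_ (hw0 i)
      have := Set.mem_iInter.1 hy j
      rw [Set.mem_setOf_eq] at this
      rw [← hj]; exact this
    have hsum : ∑ i, w i * (inner ℝ (y - q) (z i - q) : ℝ) = 0 := by
      have : ∑ i, w i * (inner ℝ (y - q) (z i - q) : ℝ)
          = (inner ℝ (y - q) (∑ i, w i • (z i - q)) : ℝ) := by
        rw [inner_sum]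
        congr 1; ext i; rw [real_inner_smul_right]
      rw [this]
      have hzero : ∑ i, w i • (z i - q) = 0 := by
        have : ∑ i, w i • (z i - q) = (∑ i, w i • z i) - (∑ i, w i) • q := by
          rw [Finset.sum_smul, ← Finset.sum_sub_distrib]
          congr 1; ext i; rw [smul_sub]
        rw [this, hzq, hw1, one_smul, sub_self]
      rw [hzero, inner_zero_right]
    obtain ⟨j, hj⟩ : ∃ j, 0 < w j := by
      by_contra h
      push_neg at h
      have : ∑ i, w i = 0 := Finset.sum_eq_zero fun i _ => le_antisymm (h i) (hw0 i)
      rw [hw1] at this; norm_num at this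
    have hjpos : 0 < w j * ‖z j - q‖ ^ 2 := by
      obtain ⟨k, hk⟩ := hz j
      refine mul_pos hj ?_
      have h0 : z j - q ≠ 0 := by rw [← hk]; exact sub_ne_zero_of_ne (hx k)
      exact pow_pos (norm_pos_iff.2 h0) 2
    have hge : (0:ℝ) < ∑ i, w i * ‖z i - q‖ ^ 2 := by
      refine Finset.sum_pos' (fun i _ => mul_nonneg (hw0 i) (sq_nonneg _)) ⟨j, Finset.mem_univ j, hjpos⟩
    have : ∑ i, w i * ‖z i - q‖ ^ 2 ≤ ∑ i, w i * (inner ℝ (y - q) (z i - q) : ℝ) :=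
      Finset.sum_le_sum fun i _ => hterm i
    linarith
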